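/- Let ζ be a weak solution of the continuous generalized exchange-driven growth equation with initial datum ζ^in ∈ L¹((0,∞),(1+x)dx), where the kernel 𝒜 satisfies 𝒜(x,y;z)=0 for z>x and the sum-type bound 𝒜(x,y;z) ≤ A φ(z) for x+y<1 and 𝒜(x,y;z) ≤ A(x+y)φ(z) for x+y>1, with φ a nonnegative function in L¹((0,∞),(1+x)dx). Then, writing ℬ(x,y;z,ζ(s)) := 𝒜(x,y;z) ζ(s,x) ζ(s,y), for every t ≥ 0: (i) lim_{p→∞} p ∫₀^t ∫_p^∞ ∫_p^∞ ∫_z^∞ ℬ(x,y;z,ζ(s)) dx dy dz ds = 0, and (ii) lim_{p→∞} p ∫₀^t ∫_p^∞ ∫₀^∞ ∫_{p+z}^∞ ℬ(x,y;z,ζ(s)) dx dy dz ds = 0. -/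

import Mathlib

open MeasureTheory Set Filter

/-- The quantity `𝒜(x,y;z) ζ(s,x) ζ(s,y)` appearing in the weak formulation. -/
noncomputable def kernelB (A : ℝ → ℝ → ℝ → ℝ) (ζ : ℝ → ℝ → ℝ) (s x y z : ℝ) : ℝ :=
  A x y z * ζ s x * ζ s y

/-- Right-hand side of the weak formulation of the continuous generalized
exchange-driven growth (CGEDG) equation, tested against `ω`. -/
noncomputable def weakRHS (A : ℝ → ℝ → ℝ → ℝ) (ζ : ℝ → ℝ → ℝ) (ω : ℝ → ℝ) (t : ℝ) : ℝ :=
  ∫ s in (0:ℝ)..t, ∫ x in Ioi (0:ℝ), ∫ y in Ioi (0:ℝ), ∫ z in Ioc (0:ℝ) x,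
    (ω (y + z) + ω (x - z) - ω x - ω y) * kernelB A ζ s x y z

/-- `ζ` is a weak solution of the CGEDG equation with kernel `A` and initial datum `ζin`:
nonnegative, lying in `L^∞(0,T; L¹((0,∞),(1+x)dx))` for each `T > 0`, weakly continuous
in time with values in `L¹`, and satisfying the weak form of the equation against every
bounded measurable test function. -/
structure IsWeakSolution (A : ℝ → ℝ → ℝ → ℝ) (ζin : ℝ → ℝ) (ζ : ℝ → ℝ → ℝ) : Prop where
  nonneg : ∀ t, 0 ≤ t → ∀ x, 0 ≤ ζ t x
  mem : ∀ t, 0 ≤ t → IntegrableOn (fun x => (1 + x) * ζ t x) (Ioi 0)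
  bdd : ∀ T, 0 < T → ∃ C : ℝ, ∀ t ∈ Icc (0:ℝ) T, ∫ x in Ioi (0:ℝ), (1 + x) * ζ t x ≤ C
  weakCont : ∀ ω : ℝ → ℝ, Measurable ω → (∃ M, ∀ x, |ω x| ≤ M) →
      ContinuousOn (fun t => ∫ x in Ioi (0:ℝ), ω x * ζ t x) (Ici 0)
  weakForm : ∀ ω : ℝ → ℝ, Measurable ω → (∃ M, ∀ x, |ω x| ≤ M) → ∀ t, 0 ≤ t →
      ∫ x in Ioi (0:ℝ), ω x * (ζ t x - ζin x) = weakRHS A ζ ω t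


/-- Auxiliary: integrability of `φ` itself from integrability of `(1+x)φ(x)`. -/
lemma phi_integrable (φ : ℝ → ℝ) (hφ_nonneg : ∀ x, 0 ≤ φ x)
    (hφ_int : IntegrableOn (fun x => (1 + x) * φ x) (Ioi 0)) :
    IntegrableOn φ (Ioi 0) := by
  have hm : AEMeasurable φ (volume.restrict (Ioi 0)) := by
    have h1 : AEMeasurable (fun x => (1 + x) * φ x) (volume.restrict (Ioi 0)) :=
      hφ_int.aestronglyMeasurable.aemeasurable
    have h2 : AEMeasurable (fun x : ℝ => (1 + x)⁻¹) (volume.restrict (Ioi 0)) :=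
      ((measurable_const.add measurable_id).inv).aemeasurable
    refine (h2.mul h1).congr ?_
    filter_upwards [ae_restrict_of_forall_mem measurableSet_Ioi
      (fun x (hx : x ∈ Ioi (0:ℝ)) => hx)] with x hx
    have hx1 : (1 + x) ≠ 0 := by simp only [mem_Ioi] at *; positivity
    show (1 + x)⁻¹ * ((1 + x) * φ x) = φ x
    field_simp
  refine Integrable.mono hφ_int hm.aestronglyMeasurable ?_
  filter_upwards [ae_restrict_of_forall_mem measurableSet_Ioi
    (fun x (hx : x ∈ Ioi (0:ℝ)) => hx)] with x hx
  have hx0 : (0:ℝ) < x := hx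
  rw [Real.norm_eq_abs, Real.norm_eq_abs, abs_of_nonneg (hφ_nonneg x),
    abs_of_nonneg (mul_nonneg (by linarith) (hφ_nonneg x))]
  nlinarith [hφ_nonneg x]

/-- Auxiliary: the tail integral of an integrable function tends to zero. -/
lemma tail_tendsto (f : ℝ → ℝ) (hf : IntegrableOn f (Ioi 0)) :
    Tendsto (fun p : ℝ => ∫ z in Ioi p, f z) atTop (nhds 0) := by
  have h := intervalIntegral_tendsto_integral_Ioi (μ := volume) 0 hf tendsto_id
  have heq : (fun p : ℝ => ∫ z in Ioi p, f z) =ᶠ[atTop]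
      fun p : ℝ => (∫ z in Ioi (0:ℝ), f z) - ∫ z in (0:ℝ)..p, f z := by
    filter_upwards [eventually_gt_atTop (0:ℝ)] with p hp
    have hu : Ioc (0:ℝ) p ∪ Ioi p = Ioi 0 := Ioc_union_Ioi_eq_Ioi hp.le
    have hsplit : ∫ z in Ioi (0:ℝ), f z
        = (∫ z in Ioc (0:ℝ) p, f z) + ∫ z in Ioi p, f z := by
      rw [← hu]
      exact setIntegral_union (Ioc_disjoint_Ioi le_rfl) measurableSet_Ioi
        (hf.mono_set (by rw [← hu]; exact subset_union_left))
        (hf.mono_set (by rw [← hu]; exact subset_union_right))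
    rw [intervalIntegral.integral_of_le hp.le]
    linarith
  have : Tendsto (fun p : ℝ => (∫ z in Ioi (0:ℝ), f z) - ∫ z in (0:ℝ)..p, f z)
      atTop (nhds ((∫ z in Ioi (0:ℝ), f z) - ∫ z in Ioi (0:ℝ), f z)) :=
    tendsto_const_nhds.sub h
  rw [sub_self] at this
  exact Tendsto.congr' heq.symm this

/-- Auxiliary: crude bound for an interval integral of a function bounded between
`0` and `M` on `(0,t]`, without any measurability assumption. -/
lemma interval_abs_le {F : ℝ → ℝ} {t M : ℝ} (ht : 0 ≤ t) (hM : 0 ≤ M)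
    (h0 : ∀ s ∈ Ioc (0:ℝ) t, 0 ≤ F s) (h1 : ∀ s ∈ Ioc (0:ℝ) t, F s ≤ M) :
    |∫ s in (0:ℝ)..t, F s| ≤ t * M := by
  rw [intervalIntegral.integral_of_le ht]
  by_cases hI : IntegrableOn F (Ioc 0 t)
  · rw [abs_of_nonneg (setIntegral_nonneg measurableSet_Ioc h0)]
    calc ∫ s in Ioc (0:ℝ) t, F s ≤ ∫ _s in Ioc (0:ℝ) t, M :=
          setIntegral_mono_on hI (integrableOn_const measure_Ioc_lt_top.ne)
            measurableSet_Ioc h1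
      _ = (volume (Ioc (0:ℝ) t)).toReal * M := by rw [setIntegral_const]; rfl
      _ = t * M := by rw [Real.volume_Ioc, ENNReal.toReal_ofReal (by linarith), sub_zero]
  · rw [integral_undef hI]
    simpa using mul_nonneg ht hM

/-- Auxiliary: the key tail bound for the triple integral. -/
lemma triple_tail_bound (A : ℝ → ℝ → ℝ → ℝ) (φ : ℝ → ℝ) (c : ℝ) (hc : 0 ≤ c)
    (hA_nonneg : ∀ x y z, 0 ≤ A x y z)
    (hsum₂ : ∀ x y z, 0 < x → 0 < y → 0 < z → 1 < x + y → A x y z ≤ c * (x + y) * φ z)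
    (hφ_nonneg : ∀ x, 0 ≤ φ x)
    (hφ_int : IntegrableOn (fun x => (1 + x) * φ x) (Ioi 0))
    (ζs : ℝ → ℝ) (hζnn : ∀ x, 0 ≤ ζs x)
    (hζint : IntegrableOn (fun x => (1 + x) * ζs x) (Ioi 0))
    (C : ℝ) (hC0 : 0 ≤ C) (hC : ∫ x in Ioi (0:ℝ), (1 + x) * ζs x ≤ C)
    (p : ℝ) (hp : 1 ≤ p) (α : ℝ) (hα : 0 ≤ α) (β : ℝ → ℝ)
    (hβ : ∀ z ∈ Ioi p, z ≤ β z)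
    (hcond : ∀ z ∈ Ioi p, ∀ x y, β z < x → α < y → 1 < x + y) :
    ∫ z in Ioi p, ∫ y in Ioi α, ∫ x in Ioi (β z), A x y z * ζs x * ζs y
      ≤ c * C ^ 2 * ∫ z in Ioi p, φ z := by
  have hζ_nonneg_ae : 0 ≤ᶠ[ae (volume.restrict (Ioi (0:ℝ)))] fun x => (1 + x) * ζs x :=
    ae_restrict_of_forall_mem measurableSet_Ioi
      (fun x hx => mul_nonneg (by simp only [mem_Ioi] at hx; linarith) (hζnn x))
  -- Step A: innermost integral bound
  have stepA : ∀ z ∈ Ioi p, ∀ y ∈ Ioi α,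
      ∫ x in Ioi (β z), A x y z * ζs x * ζs y ≤ c * φ z * ((1 + y) * ζs y) * C := by
    intro z hz y hy
    simp only [mem_Ioi] at hz hy
    have hz0 : 0 < z := by linarith
    have hy0 : 0 < y := lt_of_le_of_lt hα hy
    have hβz : z ≤ β z := hβ z hz
    have hβ0 : 0 < β z := lt_of_lt_of_le hz0 hβz
    have hsub : Ioi (β z) ⊆ Ioi (0:ℝ) := Ioi_subset_Ioi hβ0.le
    have hgint : IntegrableOn (fun x => (c * φ z * ((1 + y) * ζs y)) * ((1 + x) * ζs x))
        (Ioi (β z)) := ((hζint.mono_set hsub).const_mul _)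
    have h1 : ∫ x in Ioi (β z), A x y z * ζs x * ζs y
        ≤ ∫ x in Ioi (β z), (c * φ z * ((1 + y) * ζs y)) * ((1 + x) * ζs x) := by
      refine integral_mono_of_nonneg ?_ hgint ?_
      · exact ae_restrict_of_forall_mem measurableSet_Ioi
          (fun x _ => mul_nonneg (mul_nonneg (hA_nonneg x y z) (hζnn x)) (hζnn y))
      · refine ae_restrict_of_forall_mem measurableSet_Ioi (fun x hx => ?_)
        have hx : β z < x := hx
        have hx0 : 0 < x := lt_trans hβ0 hx
        have hxy : 1 < x + y := hcond z hz x y hx hy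
        have hA := hsum₂ x y z hx0 hy0 hz0 hxy
        have h2 : A x y z * ζs x * ζs y ≤ (c * (x + y) * φ z) * ζs x * ζs y := by
          have := mul_le_mul_of_nonneg_right hA (hζnn x)
          exact mul_le_mul_of_nonneg_right this (hζnn y)
        refine h2.trans ?_
        have hφz := hφ_nonneg z
        show c * (x + y) * φ z * ζs x * ζs y
            ≤ c * φ z * ((1 + y) * ζs y) * ((1 + x) * ζs x)
        nlinarith [mul_nonneg (mul_nonneg hc hφz) (mul_nonneg (hζnn x) (hζnn y)),
          mul_nonneg (mul_nonneg hc hφz) (mul_nonneg (mul_nonneg (hζnn x) (hζnn y))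
            (mul_nonneg hx0.le hy0.le))]
    rw [integral_const_mul] at h1
    refine h1.trans ?_
    have hconst : 0 ≤ c * φ z * ((1 + y) * ζs y) := by
      have := hφ_nonneg z
      have := hζnn y
      positivity
    have h3 : ∫ x in Ioi (β z), (1 + x) * ζs x ≤ C := by
      refine le_trans (setIntegral_mono_set hζint hζ_nonneg_ae hsub.eventuallyLE) hC
    calc c * φ z * ((1 + y) * ζs y) * ∫ x in Ioi (β z), (1 + x) * ζs x
        ≤ c * φ z * ((1 + y) * ζs y) * C := mul_le_mul_of_nonneg_left h3 hconst
      _ = c * φ z * ((1 + y) * ζs y) * C := rfl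
  -- Step B: middle integral bound
  have stepB : ∀ z ∈ Ioi p,
      ∫ y in Ioi α, ∫ x in Ioi (β z), A x y z * ζs x * ζs y ≤ c * C ^ 2 * φ z := by
    intro z hz
    have hφz := hφ_nonneg z
    have hsubα : Ioi α ⊆ Ioi (0:ℝ) := Ioi_subset_Ioi hα
    have hgint : IntegrableOn (fun y => (c * φ z * C) * ((1 + y) * ζs y)) (Ioi α) :=
      ((hζint.mono_set hsubα).const_mul _)
    have h1 : ∫ y in Ioi α, ∫ x in Ioi (β z), A x y z * ζs x * ζs y
        ≤ ∫ y in Ioi α, (c * φ z * C) * ((1 + y) * ζs y) := by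
      refine integral_mono_of_nonneg ?_ hgint ?_
      · exact ae_restrict_of_forall_mem measurableSet_Ioi (fun y _ =>
          setIntegral_nonneg measurableSet_Ioi (fun x _ =>
            mul_nonneg (mul_nonneg (hA_nonneg x y z) (hζnn x)) (hζnn y)))
      · refine ae_restrict_of_forall_mem measurableSet_Ioi (fun y hy => ?_)
        have := stepA z hz y hy
        calc ∫ x in Ioi (β z), A x y z * ζs x * ζs y
            ≤ c * φ z * ((1 + y) * ζs y) * C := this
          _ = (c * φ z * C) * ((1 + y) * ζs y) := by ring
    rw [integral_const_mul] at h1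
    refine h1.trans ?_
    have h3 : ∫ y in Ioi α, (1 + y) * ζs y ≤ C :=
      le_trans (setIntegral_mono_set hζint hζ_nonneg_ae hsubα.eventuallyLE) hC
    calc (c * φ z * C) * ∫ y in Ioi α, (1 + y) * ζs y
        ≤ (c * φ z * C) * C := mul_le_mul_of_nonneg_left h3 (by positivity)
      _ = c * C ^ 2 * φ z := by ring
  -- Step C: outer integral
  have hφint0 : IntegrableOn φ (Ioi 0) := phi_integrable φ hφ_nonneg hφ_int
  have hsubp : Ioi p ⊆ Ioi (0:ℝ) := Ioi_subset_Ioi (by linarith)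
  have hgint : IntegrableOn (fun z => (c * C ^ 2) * φ z) (Ioi p) :=
    ((hφint0.mono_set hsubp).const_mul _)
  have h1 : ∫ z in Ioi p, ∫ y in Ioi α, ∫ x in Ioi (β z), A x y z * ζs x * ζs y
      ≤ ∫ z in Ioi p, (c * C ^ 2) * φ z := by
    refine integral_mono_of_nonneg ?_ hgint ?_
    · exact ae_restrict_of_forall_mem measurableSet_Ioi (fun z _ =>
        setIntegral_nonneg measurableSet_Ioi (fun y _ =>
          setIntegral_nonneg measurableSet_Ioi (fun x _ =>
            mul_nonneg (mul_nonneg (hA_nonneg x y z) (hζnn x)) (hζnn y))))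
    · refine ae_restrict_of_forall_mem measurableSet_Ioi (fun z hz => ?_)
      calc ∫ y in Ioi α, ∫ x in Ioi (β z), A x y z * ζs x * ζs y
          ≤ c * C ^ 2 * φ z := stepB z hz
        _ = (c * C ^ 2) * φ z := by ring
  rw [integral_const_mul] at h1
  exact h1

/-- **Vanishing of two weighted tail integrals (sum-type kernels).** For a weak
solution `ζ` and each `t ≥ 0`, both
`p ∫₀^t ∫_p^∞ ∫_p^∞ ∫_z^∞ ℬ dx dy dz ds` and
`p ∫₀^t ∫_p^∞ ∫₀^∞ ∫_{p+z}^∞ ℬ dx dy dz ds` tend to `0` as `p → ∞`. -/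
theorem weak_solution_tail_integrals_vanish
    (A : ℝ → ℝ → ℝ → ℝ) (φ ζin : ℝ → ℝ) (c : ℝ) (hc : 0 ≤ c)
    (hA_meas : Measurable (fun p : ℝ × ℝ × ℝ => A p.1 p.2.1 p.2.2))
    (hA_nonneg : ∀ x y z, 0 ≤ A x y z)
    (hphys : ∀ x y z, x < z → A x y z = 0)
    (hsum₁ : ∀ x y z, 0 < x → 0 < y → 0 < z → x + y < 1 → A x y z ≤ c * φ z)
    (hsum₂ : ∀ x y z, 0 < x → 0 < y → 0 < z → 1 < x + y → A x y z ≤ c * (x + y) * φ z)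
    (hφ_nonneg : ∀ x, 0 ≤ φ x)
    (hφ_int : IntegrableOn (fun x => (1 + x) * φ x) (Ioi 0))
    (hζin_nonneg : ∀ x, 0 ≤ ζin x)
    (hζin_int : IntegrableOn (fun x => (1 + x) * ζin x) (Ioi 0))
    (ζ : ℝ → ℝ → ℝ) (hζ : IsWeakSolution A ζin ζ) :
    ∀ t : ℝ, 0 ≤ t →
      Tendsto (fun p : ℝ => p * ∫ s in (0:ℝ)..t, ∫ z in Ioi p, ∫ y in Ioi p,
          ∫ x in Ioi z, kernelB A ζ s x y z) atTop (nhds 0) ∧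
      Tendsto (fun p : ℝ => p * ∫ s in (0:ℝ)..t, ∫ z in Ioi p, ∫ y in Ioi (0:ℝ),
          ∫ x in Ioi (p + z), kernelB A ζ s x y z) atTop (nhds 0) := by
  intro t ht
  rcases eq_or_lt_of_le ht with ht0 | htpos
  · simp only [← ht0, intervalIntegral.integral_same, mul_zero]
    exact ⟨tendsto_const_nhds, tendsto_const_nhds⟩
  · obtain ⟨C, hCb⟩ := hζ.bdd t htpos
    set D := max C 0 with hD
    have hD0 : 0 ≤ D := le_max_right _ _
    have hDb : ∀ s ∈ Icc (0:ℝ) t, ∫ x in Ioi (0:ℝ), (1 + x) * ζ s x ≤ D :=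
      fun s hs => (hCb s hs).trans (le_max_left _ _)
    have hφint0 := phi_integrable φ hφ_nonneg hφ_int
    have hmaj : Tendsto (fun p : ℝ => (t * c * D ^ 2) * ∫ z in Ioi p, (1 + z) * φ z)
        atTop (nhds 0) := by
      have := (tail_tendsto _ hφ_int).const_mul (t * c * D ^ 2)
      simpa using this
    have hconst0 : 0 ≤ t * c * D ^ 2 :=
      mul_nonneg (mul_nonneg htpos.le hc) (sq_nonneg D)
    -- generic estimate
    have key : ∀ p : ℝ, 1 ≤ p → ∀ α : ℝ, 0 ≤ α → ∀ β : ℝ → ℝ,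
        (∀ z ∈ Ioi p, z ≤ β z) →
        (∀ z ∈ Ioi p, ∀ x y : ℝ, β z < x → α < y → 1 < x + y) →
        |p * ∫ s in (0:ℝ)..t, ∫ z in Ioi p, ∫ y in Ioi α, ∫ x in Ioi (β z),
            kernelB A ζ s x y z|
          ≤ (t * c * D ^ 2) * ∫ z in Ioi p, (1 + z) * φ z := by
      intro p hp α hα β hβ hcond
      set B : ℝ := c * D ^ 2 * ∫ z in Ioi p, φ z with hBdef
      have hφp : IntegrableOn φ (Ioi p) := hφint0.mono_set (Ioi_subset_Ioi (by linarith))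
      have hB0 : 0 ≤ B := by
        refine mul_nonneg (mul_nonneg hc (sq_nonneg D)) ?_
        exact setIntegral_nonneg measurableSet_Ioi (fun z _ => hφ_nonneg z)
      have hJ : |∫ s in (0:ℝ)..t, ∫ z in Ioi p, ∫ y in Ioi α, ∫ x in Ioi (β z),
          kernelB A ζ s x y z| ≤ t * B := by
        refine interval_abs_le htpos.le hB0 ?_ ?_
        · intro s hs
          exact setIntegral_nonneg measurableSet_Ioi (fun z _ =>
            setIntegral_nonneg measurableSet_Ioi (fun y _ =>
              setIntegral_nonneg measurableSet_Ioi (fun x _ =>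
                mul_nonneg (mul_nonneg (hA_nonneg x y z) (hζ.nonneg s hs.1.le x))
                  (hζ.nonneg s hs.1.le y))))
        · intro s hs
          exact triple_tail_bound A φ c hc hA_nonneg hsum₂ hφ_nonneg hφ_int
            (ζ s) (hζ.nonneg s hs.1.le) (hζ.mem s hs.1.le) D hD0
            (hDb s ⟨hs.1.le, hs.2⟩) p hp α hα β hβ hcond
      have hp0 : 0 < p := lt_of_lt_of_le one_pos hp
      have h5 : p * ∫ z in Ioi p, φ z ≤ ∫ z in Ioi p, (1 + z) * φ z := by
        rw [← integral_const_mul]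
        refine setIntegral_mono_on (hφp.const_mul p)
          (hφ_int.mono_set (Ioi_subset_Ioi (by linarith))) measurableSet_Ioi ?_
        intro z hz
        have hz : p < z := hz
        exact mul_le_mul_of_nonneg_right (by linarith) (hφ_nonneg z)
      calc |p * ∫ s in (0:ℝ)..t, ∫ z in Ioi p, ∫ y in Ioi α, ∫ x in Ioi (β z),
              kernelB A ζ s x y z|
          = p * |∫ s in (0:ℝ)..t, ∫ z in Ioi p, ∫ y in Ioi α, ∫ x in Ioi (β z),
              kernelB A ζ s x y z| := by rw [abs_mul, abs_of_nonneg hp0.le]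
        _ ≤ p * (t * B) := mul_le_mul_of_nonneg_left hJ hp0.le
        _ = (t * c * D ^ 2) * (p * ∫ z in Ioi p, φ z) := by rw [hBdef]; ring
        _ ≤ (t * c * D ^ 2) * ∫ z in Ioi p, (1 + z) * φ z :=
            mul_le_mul_of_nonneg_left h5 hconst0
    constructor
    · refine squeeze_zero_norm' ?_ hmaj
      filter_upwards [eventually_ge_atTop (1:ℝ)] with p hp
      exact key p hp p (by linarith) (fun z => z) (fun z _ => le_rfl)
        (fun z hz x y hx hy => by
          simp only [mem_Ioi] at hz; linarith)
    · refine squeeze_zero_norm' ?_ hmaj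
      filter_upwards [eventually_ge_atTop (1:ℝ)] with p hp
      exact key p hp 0 le_rfl (fun z => p + z)
        (fun z hz => by show z ≤ p + z; linarith)
        (fun z hz x y hx hy => by
          simp only [mem_Ioi] at hz
          have hx' : p + z < x := hx
          linarith)
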